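/- Let δ₀ ∈ (0,1), let B = max(5/δ₀, (1/0.45)·ln(5/δ₀²)), and define h : ℝ → ℝ by h(x) = 1 − (1−x)³·exp(−B·x). Then: (i) h'(1) = 0 and h''(1) = 0; (ii) for every Δ ∈ [−0.55, 1/δ₀²], |h(1+Δ) − 1| ≤ (δ₀²/5)·|Δ|; (iii) for every Δ ∈ [−1, −0.55], 0 ≤ h(1+Δ) ≤ 1. -/

import Mathlib

set_option maxHeartbeats 1000000 in
/-- For `δ₀ ∈ (0,1)`, `B = max(5/δ₀, (1/0.45)·ln(5/δ₀²))` and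
`h(x) = 1 − (1−x)³·exp(−B·x)`: (i) `h'(1) = h''(1) = 0`;
(ii) `|h(1+Δ) − 1| ≤ (δ₀²/5)|Δ|` for `Δ ∈ [−0.55, 1/δ₀²]`;
(iii) `0 ≤ h(1+Δ) ≤ 1` for `Δ ∈ [−1, −0.55]`. -/
theorem stmt_13 (δ₀ : ℝ) (h0 : 0 < δ₀) (h1 : δ₀ < 1) (B : ℝ)
    (hB : B = max (5 / δ₀) ((1 / 0.45) * Real.log (5 / δ₀ ^ 2)))
    (h : ℝ → ℝ) (hh : h = fun x => 1 - (1 - x) ^ 3 * Real.exp (-B * x)) :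
    (deriv h 1 = 0 ∧ deriv (deriv h) 1 = 0) ∧
    (∀ Δ : ℝ, -0.55 ≤ Δ → Δ ≤ 1 / δ₀ ^ 2 → |h (1 + Δ) - 1| ≤ δ₀ ^ 2 / 5 * |Δ|) ∧
    (∀ Δ : ℝ, -1 ≤ Δ → Δ ≤ -0.55 → 0 ≤ h (1 + Δ) ∧ h (1 + Δ) ≤ 1) := by
  have hB5 : 5 / δ₀ ≤ B := hB ▸ le_max_left _ _
  have hBlog : (1 / 0.45) * Real.log (5 / δ₀ ^ 2) ≤ B := hB ▸ le_max_right _ _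
  have hBpos : 0 < B := lt_of_lt_of_le (by positivity) hB5
  -- derivative formula
  have hx : ∀ x : ℝ, HasDerivAt h ((3 * (1 - x) ^ 2 + B * (1 - x) ^ 3) * Real.exp (-B * x)) x := by
    intro x
    rw [hh]
    have h1 : HasDerivAt (fun x : ℝ => 1 - x) (-1) x := by
      simpa using (hasDerivAt_id x).const_sub 1
    have h3 : HasDerivAt (fun x : ℝ => Real.exp (-B * x)) (Real.exp (-B * x) * (-B)) x := by
      simpa using ((hasDerivAt_id x).const_mul (-B)).exp
    have h4 := ((h1.pow 3).mul h3).const_sub 1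
    refine h4.congr_deriv ?_
    norm_num [Pi.pow_apply]
    ring
  have hderiv : deriv h = fun x => (3 * (1 - x) ^ 2 + B * (1 - x) ^ 3) * Real.exp (-B * x) :=
    funext fun x => (hx x).deriv
  constructor
  · constructor
    · rw [hderiv]; norm_num
    · rw [hderiv]
      have h1 : HasDerivAt (fun x : ℝ => 1 - x) (-1) 1 := by
        simpa using (hasDerivAt_id (1:ℝ)).const_sub 1
      have h3 : HasDerivAt (fun x : ℝ => Real.exp (-B * x)) (Real.exp (-B * 1) * (-B)) 1 := by
        simpa using ((hasDerivAt_id (1:ℝ)).const_mul (-B)).exp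
      have h4 := (((h1.pow 2).const_mul 3).add ((h1.pow 3).const_mul B)).mul h3
      have h5 : HasDerivAt
          (fun x : ℝ => (3 * (1 - x) ^ 2 + B * (1 - x) ^ 3) * Real.exp (-B * x)) 0 1 := by
        refine h4.congr_deriv ?_
        norm_num
      exact h5.deriv
  constructor
  · intro Δ hlo hhi
    rw [hh]
    have key : (1 - (1 - (1 + Δ)) ^ 3 * Real.exp (-B * (1 + Δ))) - 1
        = Δ ^ 3 * Real.exp (-B * (1 + Δ)) := by ring
    simp only [key]
    have epos := Real.exp_pos (-B * (1 + Δ))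
    have habs : |Δ ^ 3 * Real.exp (-B * (1 + Δ))| = Δ ^ 2 * Real.exp (-B * (1 + Δ)) * |Δ| := by
      rw [abs_mul, abs_of_pos epos]
      rcases le_or_gt 0 Δ with hd | hd
      · rw [abs_of_nonneg (by positivity), abs_of_nonneg hd]; ring
      · have h3 : Δ ^ 3 ≤ 0 := by nlinarith [mul_nonneg (sq_nonneg Δ) (neg_nonneg.2 hd.le)]
        rw [abs_of_nonpos h3, abs_of_neg hd]; ring
    rw [habs]
    have main : Δ ^ 2 * Real.exp (-B * (1 + Δ)) ≤ δ₀ ^ 2 / 5 := by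
      rcases le_or_gt Δ 0 with hd | hd
      · -- Δ ∈ [-0.55, 0]
        have h45 : -B * (1 + Δ) ≤ -(0.45 * B) := by nlinarith
        have hlog : 0.45 * B ≥ Real.log (5 / δ₀ ^ 2) := by nlinarith
        have h5pos : (0:ℝ) < 5 / δ₀ ^ 2 := by positivity
        have : Real.exp (-B * (1 + Δ)) ≤ δ₀ ^ 2 / 5 := by
          calc Real.exp (-B * (1 + Δ)) ≤ Real.exp (-Real.log (5 / δ₀ ^ 2)) := by
                apply Real.exp_le_exp.2; linarith
            _ = δ₀ ^ 2 / 5 := by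
                rw [Real.exp_neg, Real.exp_log h5pos]
                field_simp
        have hΔ1 : Δ ^ 2 ≤ 1 := by nlinarith
        calc Δ ^ 2 * Real.exp (-B * (1 + Δ)) ≤ 1 * (δ₀ ^ 2 / 5) :=
              mul_le_mul hΔ1 this (Real.exp_pos _).le one_pos.le
          _ = δ₀ ^ 2 / 5 := one_mul _
      · -- Δ > 0
        have hBΔ : 0 ≤ B * Δ := by positivity
        have hsplit : Real.exp (-B * (1 + Δ)) = Real.exp (-B) * Real.exp (-(B * Δ)) := by
          rw [← Real.exp_add]; ring_nf
        have hexpB : Real.exp (-B) ≤ 1 := Real.exp_le_one_iff.2 (by linarith)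
        -- t² ≤ 4 exp t for t = BΔ ≥ 0
        set t := B * Δ with ht
        have h1' : t / 2 + 1 ≤ Real.exp (t / 2) := Real.add_one_le_exp _
        have h2' : Real.exp (t / 2) * Real.exp (t / 2) = Real.exp t := by
          rw [← Real.exp_add]; ring_nf
        have ht4 : t ^ 2 ≤ 4 * Real.exp t := by nlinarith [Real.exp_pos (t/2)]
        have hexpt : Real.exp (-t) = (Real.exp t)⁻¹ := Real.exp_neg t
        have hexptpos := Real.exp_pos t
        have h8 : Real.exp (-t) * Real.exp t = 1 := by rw [← Real.exp_add]; simp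
        have h9 : B ^ 2 * Δ ^ 2 * Real.exp (-t) ≤ 4 := by
          calc B ^ 2 * Δ ^ 2 * Real.exp (-t) = t ^ 2 * Real.exp (-t) := by rw [ht]; ring
            _ ≤ (4 * Real.exp t) * Real.exp (-t) :=
                mul_le_mul_of_nonneg_right ht4 (Real.exp_pos _).le
            _ = 4 * (Real.exp (-t) * Real.exp t) := by ring
            _ = 4 := by rw [h8]; ring
        have hΔ2 : Δ ^ 2 * Real.exp (-t) ≤ 4 / B ^ 2 := by
          rw [le_div_iff₀ (by positivity : (0:ℝ) < B ^ 2)]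
          nlinarith [h9]
        have hBB : 4 / B ^ 2 ≤ δ₀ ^ 2 / 5 := by
          rw [div_le_div_iff₀ (by positivity) (by norm_num)]
          have h5B : 5 ≤ B * δ₀ := (div_le_iff₀ h0).1 hB5
          nlinarith [h5B, mul_pos hBpos h0]
        calc Δ ^ 2 * Real.exp (-B * (1 + Δ))
            = Real.exp (-B) * (Δ ^ 2 * Real.exp (-t)) := by rw [hsplit]; ring
          _ ≤ 1 * (4 / B ^ 2) := by
              apply mul_le_mul hexpB hΔ2 (by positivity) (by norm_num)
          _ ≤ δ₀ ^ 2 / 5 := by linarith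
    have := mul_le_mul_of_nonneg_right main (abs_nonneg Δ)
    linarith
  · intro Δ hlo hhi
    rw [hh]
    simp only
    have epos := Real.exp_pos (-B * (1 + Δ))
    have key : 1 - (1 - (1 + Δ)) ^ 3 * Real.exp (-B * (1 + Δ))
        = 1 + Δ ^ 3 * Real.exp (-B * (1 + Δ)) := by ring
    rw [key]
    have hele : Real.exp (-B * (1 + Δ)) ≤ 1 := Real.exp_le_one_iff.2 (by nlinarith)
    have hΔneg : Δ ≤ 0 := by linarith
    have hΔ3le : Δ ^ 3 ≤ 0 := by
      nlinarith [mul_nonneg (sq_nonneg Δ) (neg_nonneg.2 hΔneg)]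
    have hΔ3ge : -1 ≤ Δ ^ 3 := by
      nlinarith [mul_nonneg (by linarith : (0:ℝ) ≤ Δ + 1)
        (by nlinarith [sq_nonneg Δ, sq_nonneg (Δ - 1)] : (0:ℝ) ≤ Δ ^ 2 - Δ + 1)]
    constructor
    · nlinarith [mul_nonneg (by linarith : (0:ℝ) ≤ Δ ^ 3 + 1) epos.le, hele, epos]
    · nlinarith [mul_nonpos_of_nonpos_of_nonneg hΔ3le epos.le]
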